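/- Let H_x be an m₁ × n matrix and H_z an m₂ × n matrix over 𝔽₂ with H_x·H_zᵀ = 0, and set k = n − rank H_x − rank H_z. Let ξ = row space of H_x (the image of H_xᵀ), η = row space of H_z, so ker H_x and ker H_z are subspaces of 𝔽₂ⁿ. Let α be any subspace of 𝔽₂ⁿ and α^⊥ its orthogonal complement with respect to the standard bilinear form ⟨u,v⟩ = Σᵢ uᵢvᵢ. Define ℓ_x = dim((ker H_z ∩ α) + ξ) − dim ξ, ℓ_z = dim((ker H_x ∩ α) + η) − dim η, ℓ'_x = dim((ker H_z ∩ α^⊥) + ξ) − dim ξ, ℓ'_z = dim((ker H_x ∩ α^⊥) + η) − dim η. Then ℓ_x + ℓ'_z = k and ℓ_z + ℓ'_x = k. -/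

import Mathlib

open Module

/-- The standard bilinear form `⟨u,v⟩ = ∑ i, uᵢ vᵢ` on `𝔽₂ⁿ`. -/
def stdBilinForm (n : ℕ) : LinearMap.BilinForm (ZMod 2) (Fin n → ZMod 2) :=
  LinearMap.mk₂ (ZMod 2) (fun u v => ∑ i, u i * v i)
    (fun u u' v => by simp [add_mul, Finset.sum_add_distrib])
    (fun c u v => by simp [Finset.mul_sum, mul_assoc])
    (fun u v v' => by simp [mul_add, Finset.sum_add_distrib])
    (fun c u v => by simp [Finset.mul_sum, mul_left_comm])

lemma stdBilinForm_apply {n : ℕ} (u v : Fin n → ZMod 2) :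
    stdBilinForm n u v = dotProduct u v := rfl

lemma stdBilinForm_isRefl {n : ℕ} : (stdBilinForm n).IsRefl := by
  intro u v h
  rw [stdBilinForm_apply, dotProduct_comm]
  exact h

lemma stdBilinForm_nondeg {n : ℕ} : (stdBilinForm n).Nondegenerate := by
  constructor
  · intro u h
    funext i
    have := h (Pi.single i 1)
    rw [stdBilinForm_apply, dotProduct_single] at this
    simpa using this
  · intro u h
    funext i
    have := h (Pi.single i 1)
    rw [stdBilinForm_apply, single_dotProduct] at this
    simpa using this

lemma ker_eq_orth {m n : ℕ} (M : Matrix (Fin m) (Fin n) (ZMod 2)) :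
    LinearMap.ker M.mulVecLin
      = (stdBilinForm n).orthogonal (LinearMap.range M.transpose.mulVecLin) := by
  ext v
  simp only [LinearMap.mem_ker, Matrix.mulVecLin_apply,
    LinearMap.BilinForm.mem_orthogonal_iff, LinearMap.BilinForm.isOrtho_def]
  constructor
  · rintro h u ⟨x, rfl⟩
    rw [Matrix.mulVecLin_apply, stdBilinForm_apply, Matrix.mulVec_transpose,
      ← Matrix.dotProduct_mulVec, h, dotProduct_zero]
  · intro h
    funext j
    have := h (M.transpose.mulVec (Pi.single j 1)) ⟨Pi.single j 1, rfl⟩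
    rw [stdBilinForm_apply, Matrix.mulVec_transpose, ← Matrix.dotProduct_mulVec,
      single_dotProduct, one_mul] at this
    simpa using this

lemma orth_sup {n : ℕ} (W U : Submodule (ZMod 2) (Fin n → ZMod 2)) :
    (stdBilinForm n).orthogonal (W ⊔ U)
      = (stdBilinForm n).orthogonal W ⊓ (stdBilinForm n).orthogonal U := by
  ext v
  simp only [Submodule.mem_inf, LinearMap.BilinForm.mem_orthogonal_iff,
    LinearMap.BilinForm.isOrtho_def]
  constructor
  · intro h
    exact ⟨fun u hu => h u (Submodule.mem_sup_left hu),
      fun u hu => h u (Submodule.mem_sup_right hu)⟩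
  · rintro ⟨h1, h2⟩ u hu
    obtain ⟨w, hw, x, hx, rfl⟩ := Submodule.mem_sup.mp hu
    rw [map_add, LinearMap.add_apply, h1 w hw, h2 x hx, add_zero]

lemma orth_finrank {n : ℕ} (W : Submodule (ZMod 2) (Fin n → ZMod 2)) :
    finrank (ZMod 2) W + finrank (ZMod 2) ((stdBilinForm n).orthogonal W) = n := by
  have h := LinearMap.BilinForm.finrank_add_finrank_orthogonal
    (B := stdBilinForm n) stdBilinForm_isRefl W
  rw [LinearMap.BilinForm.orthogonal_top_eq_bot stdBilinForm_nondeg,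
    inf_bot_eq, finrank_bot, add_zero, Module.finrank_pi] at h
  simpa using h

lemma orth_orth {n : ℕ} (W : Submodule (ZMod 2) (Fin n → ZMod 2)) :
    (stdBilinForm n).orthogonal ((stdBilinForm n).orthogonal W) = W :=
  (stdBilinForm n).orthogonal_orthogonal stdBilinForm_nondeg stdBilinForm_isRefl W

/-- Key half-identity. -/
lemma key {n : ℕ} (ξ η α : Submodule (ZMod 2) (Fin n → ZMod 2))
    (h : ξ ≤ (stdBilinForm n).orthogonal η) :
    ((finrank (ZMod 2)
        (((stdBilinForm n).orthogonal η ⊓ α) ⊔ ξ : Submodule (ZMod 2) (Fin n → ZMod 2)) : ℤ)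
      - finrank (ZMod 2) ξ)
    + ((finrank (ZMod 2)
        (((stdBilinForm n).orthogonal ξ ⊓ (stdBilinForm n).orthogonal α) ⊔ η :
          Submodule (ZMod 2) (Fin n → ZMod 2)) : ℤ)
      - finrank (ZMod 2) η)
    = (n : ℤ) - finrank (ZMod 2) ξ - finrank (ZMod 2) η := by
  set B := stdBilinForm n
  have hηξ : η ≤ B.orthogonal ξ := by
    intro y hy x hx
    exact stdBilinForm_isRefl _ _ (h hx y hy)
  -- e1
  have e1 : finrank (ZMod 2) (((B.orthogonal η ⊓ α) ⊔ ξ : Submodule (ZMod 2) (Fin n → ZMod 2)))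
      + finrank (ZMod 2) (((B.orthogonal η ⊓ α) ⊓ ξ : Submodule (ZMod 2) (Fin n → ZMod 2)))
      = finrank (ZMod 2) ((B.orthogonal η ⊓ α : Submodule (ZMod 2) (Fin n → ZMod 2))) + finrank (ZMod 2) ξ :=
    Submodule.finrank_sup_add_finrank_inf_eq _ _
  have e1' : (B.orthogonal η ⊓ α) ⊓ ξ = α ⊓ ξ := by
    rw [inf_assoc]
    exact inf_eq_right.mpr (le_trans inf_le_right h)
  rw [e1'] at e1
  -- e2
  have e2 : finrank (ZMod 2) (((B.orthogonal ξ ⊓ B.orthogonal α) ⊔ η : Submodule (ZMod 2) (Fin n → ZMod 2)))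
      + finrank (ZMod 2) (((B.orthogonal ξ ⊓ B.orthogonal α) ⊓ η : Submodule (ZMod 2) (Fin n → ZMod 2)))
      = finrank (ZMod 2) ((B.orthogonal ξ ⊓ B.orthogonal α : Submodule (ZMod 2) (Fin n → ZMod 2))) + finrank (ZMod 2) η :=
    Submodule.finrank_sup_add_finrank_inf_eq _ _
  have e2' : (B.orthogonal ξ ⊓ B.orthogonal α) ⊓ η = B.orthogonal α ⊓ η := by
    rw [inf_right_comm, inf_eq_right.mpr hηξ]
    exact inf_comm _ _
  rw [e2'] at e2
  -- dims via orthogonality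
  have e3 : finrank (ZMod 2) ((ξ ⊔ α : Submodule (ZMod 2) (Fin n → ZMod 2)))
      + finrank (ZMod 2) ((B.orthogonal ξ ⊓ B.orthogonal α : Submodule (ZMod 2) (Fin n → ZMod 2))) = n := by
    rw [← orth_sup]; exact orth_finrank _
  have e4 : finrank (ZMod 2) ((ξ ⊔ α : Submodule (ZMod 2) (Fin n → ZMod 2)))
      + finrank (ZMod 2) ((ξ ⊓ α : Submodule (ZMod 2) (Fin n → ZMod 2)))
      = finrank (ZMod 2) ξ + finrank (ZMod 2) α :=
    Submodule.finrank_sup_add_finrank_inf_eq _ _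
  have e5 : finrank (ZMod 2) ((α ⊔ B.orthogonal η : Submodule (ZMod 2) (Fin n → ZMod 2)))
      + finrank (ZMod 2) ((B.orthogonal α ⊓ η : Submodule (ZMod 2) (Fin n → ZMod 2))) = n := by
    have := orth_finrank (n := n) (α ⊔ B.orthogonal η)
    rwa [orth_sup, orth_orth] at this
  have e6 : finrank (ZMod 2) ((α ⊔ B.orthogonal η : Submodule (ZMod 2) (Fin n → ZMod 2)))
      + finrank (ZMod 2) ((α ⊓ B.orthogonal η : Submodule (ZMod 2) (Fin n → ZMod 2)))
      = finrank (ZMod 2) α + finrank (ZMod 2) (B.orthogonal η) :=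
    Submodule.finrank_sup_add_finrank_inf_eq _ _
  have e7 : finrank (ZMod 2) η + finrank (ZMod 2) (B.orthogonal η) = n :=
    orth_finrank _
  have c1 : ξ ⊓ α = α ⊓ ξ := inf_comm _ _
  have c2 : α ⊓ B.orthogonal η = B.orthogonal η ⊓ α := inf_comm _ _
  rw [c1] at e4
  rw [c2] at e6
  omega

/-- Cleaning identity for CSS codes. Given `𝔽₂`-matrices `H_x, H_z`
with `H_x H_zᵀ = 0`, `k = n − rk H_x − rk H_z`, row spaces `ξ = im H_xᵀ`, `η = im H_zᵀ`,
a subspace `α ⊆ 𝔽₂ⁿ`, and the numbers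
`ℓ_x = dim((ker H_z ∩ α) + ξ) − dim ξ`, `ℓ_z = dim((ker H_x ∩ α) + η) − dim η`,
`ℓ'_x = dim((ker H_z ∩ α^⊥) + ξ) − dim ξ`, `ℓ'_z = dim((ker H_x ∩ α^⊥) + η) − dim η`,
one has `ℓ_x + ℓ'_z = k` and `ℓ_z + ℓ'_x = k`. -/
theorem cleaning_identity_CSS {n m₁ m₂ : ℕ}
    (Hx : Matrix (Fin m₁) (Fin n) (ZMod 2)) (Hz : Matrix (Fin m₂) (Fin n) (ZMod 2))
    (hcss : Hx * Hz.transpose = 0)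
    (k : ℤ) (hk : k = (n : ℤ) - Hx.rank - Hz.rank)
    (ξ η : Submodule (ZMod 2) (Fin n → ZMod 2))
    (hξ : ξ = LinearMap.range Hx.transpose.mulVecLin)
    (hη : η = LinearMap.range Hz.transpose.mulVecLin)
    (α αperp : Submodule (ZMod 2) (Fin n → ZMod 2))
    (hαperp : αperp = (stdBilinForm n).orthogonal α)
    (lx lz lx' lz' : ℤ)
    (hlx : lx = (finrank (ZMod 2)
        ((LinearMap.ker Hz.mulVecLin ⊓ α) ⊔ ξ : Submodule (ZMod 2) (Fin n → ZMod 2)) : ℤ)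
      - finrank (ZMod 2) ξ)
    (hlz : lz = (finrank (ZMod 2)
        ((LinearMap.ker Hx.mulVecLin ⊓ α) ⊔ η : Submodule (ZMod 2) (Fin n → ZMod 2)) : ℤ)
      - finrank (ZMod 2) η)
    (hlx' : lx' = (finrank (ZMod 2)
        ((LinearMap.ker Hz.mulVecLin ⊓ αperp) ⊔ ξ : Submodule (ZMod 2) (Fin n → ZMod 2)) : ℤ)
      - finrank (ZMod 2) ξ)
    (hlz' : lz' = (finrank (ZMod 2)
        ((LinearMap.ker Hx.mulVecLin ⊓ αperp) ⊔ η : Submodule (ZMod 2) (Fin n → ZMod 2)) : ℤ)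
      - finrank (ZMod 2) η) :
    lx + lz' = k ∧ lz + lx' = k := by
  subst hk hξ hη hαperp hlx hlz hlx' hlz'
  set X := LinearMap.range Hx.transpose.mulVecLin with hX
  set Z := LinearMap.range Hz.transpose.mulVecLin with hZ
  have hcss' : Hz * Hx.transpose = 0 := by
    have := congrArg Matrix.transpose hcss
    rwa [Matrix.transpose_mul, Matrix.transpose_transpose, Matrix.transpose_zero] at this
  have hXk : X ≤ LinearMap.ker Hz.mulVecLin := by
    rintro _ ⟨x, rfl⟩
    simp only [LinearMap.mem_ker, Matrix.mulVecLin_apply, Matrix.mulVec_mulVec, hcss',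
      Matrix.zero_mulVec]
  have hZk : Z ≤ LinearMap.ker Hx.mulVecLin := by
    rintro _ ⟨x, rfl⟩
    simp only [LinearMap.mem_ker, Matrix.mulVecLin_apply, Matrix.mulVec_mulVec, hcss,
      Matrix.zero_mulVec]
  have hkerx : LinearMap.ker Hx.mulVecLin = (stdBilinForm n).orthogonal X := ker_eq_orth Hx
  have hkerz : LinearMap.ker Hz.mulVecLin = (stdBilinForm n).orthogonal Z := ker_eq_orth Hz
  have hXZ : X ≤ (stdBilinForm n).orthogonal Z := hkerz ▸ hXk
  have hZX : Z ≤ (stdBilinForm n).orthogonal X := hkerx ▸ hZk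
  have hrx : finrank (ZMod 2) X = Hx.rank := by
    rw [← Matrix.rank_transpose Hx]; rfl
  have hrz : finrank (ZMod 2) Z = Hz.rank := by
    rw [← Matrix.rank_transpose Hz]; rfl
  have h1 := key X Z α hXZ
  have h2 := key Z X α hZX
  rw [hkerx, hkerz, hrx, hrz] at *
  constructor
  · linarith
  · linarith
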